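/- Let F be a finitely supported sequence in the open unit disc and (a, b) its nonlinear Fourier transform. Then the normalized integral over the unit circle of log|a| equals −(1/2)·∑_n log(1 − |F_n|^2) (the nonlinear Plancherel identity). -/

import Mathlib

open Complex Polynomial Metric

/-- The transfer matrix `T_n(z) = (1−|F_n|²)^{-1/2}·[[1, F_n zⁿ],[conj(F_n) z⁻ⁿ, 1]]`. -/
noncomputable def transfer (F : ℤ → ℂ) (z : ℂ) (n : ℤ) : Matrix (Fin 2) (Fin 2) ℂ :=
  (((Real.sqrt (1 - ‖F n‖ ^ 2))⁻¹ : ℝ) : ℂ) •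
    !![1, F n * z ^ n; (starRingEnd ℂ) (F n) * z ^ (-n), 1]

/-- The nonlinear Fourier transform matrix (ordered product over `s`). -/
noncomputable def nlft (F : ℤ → ℂ) (s : Finset ℤ) (z : ℂ) : Matrix (Fin 2) (Fin 2) ℂ :=
  ((s.sort (· ≤ ·)).map (transfer F z)).prod


lemma transfer00 (F : ℤ → ℂ) (z : ℂ) (n : ℤ) :
    transfer F z n 0 0 = (((Real.sqrt (1 - ‖F n‖ ^ 2))⁻¹ : ℝ) : ℂ) := by
  simp [transfer]

lemma transfer01 (F : ℤ → ℂ) (z : ℂ) (n : ℤ) :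
    transfer F z n 0 1 = (((Real.sqrt (1 - ‖F n‖ ^ 2))⁻¹ : ℝ) : ℂ) * (F n * z ^ n) := by
  simp [transfer]

lemma transfer10 (F : ℤ → ℂ) (z : ℂ) (n : ℤ) :
    transfer F z n 1 0 = (((Real.sqrt (1 - ‖F n‖ ^ 2))⁻¹ : ℝ) : ℂ)
      * ((starRingEnd ℂ) (F n) * z ^ (-n)) := by
  simp [transfer]

lemma transfer11 (F : ℤ → ℂ) (z : ℂ) (n : ℤ) :
    transfer F z n 1 1 = (((Real.sqrt (1 - ‖F n‖ ^ 2))⁻¹ : ℝ) : ℂ) := by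
  simp [transfer]

lemma conj_zpow_circle {z : ℂ} (hz : ‖z‖ = 1) (n : ℤ) :
    (starRingEnd ℂ) (z ^ n) = z ^ (-n) := by
  have hz0 : z ≠ 0 := by
    intro h; rw [h] at hz; simp at hz
  have h1 : (starRingEnd ℂ) z = z⁻¹ := by
    have := Complex.mul_conj z
    rw [Complex.normSq_eq_norm_sq, hz] at this
    field_simp at this ⊢
    rw [mul_comm] at this
    simpa [mul_comm] using this
  rw [map_zpow₀, h1, inv_zpow, ← zpow_neg]

lemma prod_symm (F : ℤ → ℂ) {z : ℂ} (hz : ‖z‖ = 1) (l : List ℤ) :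
    ((l.map (transfer F z)).prod 1 1 = (starRingEnd ℂ) ((l.map (transfer F z)).prod 0 0)) ∧
    ((l.map (transfer F z)).prod 1 0 = (starRingEnd ℂ) ((l.map (transfer F z)).prod 0 1)) := by
  induction l with
  | nil => simp
  | cons n l ih =>
    obtain ⟨ih1, ih2⟩ := ih
    simp only [List.map_cons, List.prod_cons]
    constructor <;>
    · rw [Matrix.mul_apply, Matrix.mul_apply, Fin.sum_univ_two, Fin.sum_univ_two]
      simp only [transfer00, transfer01, transfer10, transfer11, ih1, ih2, map_add, map_mul,
        conj_zpow_circle hz, Complex.conj_conj, Complex.conj_ofReal, neg_neg]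
      ring

lemma det_transfer (F : ℤ → ℂ) (hF : ∀ n, ‖F n‖ < 1) {z : ℂ} (hz : z ≠ 0) (n : ℤ) :
    (transfer F z n).det = 1 := by
  have h1 : (0:ℝ) < 1 - ‖F n‖ ^ 2 := by
    have := hF n
    nlinarith [norm_nonneg (F n)]
  rw [Matrix.det_fin_two]
  rw [transfer00, transfer01, transfer10, transfer11]
  have hzz : z ^ n * z ^ (-n) = 1 := by
    rw [← zpow_add₀ hz]; simp
  have hsq : ((((Real.sqrt (1 - ‖F n‖ ^ 2))⁻¹ : ℝ) : ℂ))^2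
      = ((1 - ‖F n‖ ^ 2 : ℝ) : ℂ)⁻¹ := by
    rw [← Complex.ofReal_pow, inv_pow, Real.sq_sqrt h1.le, Complex.ofReal_inv]
  have hFmul : F n * (starRingEnd ℂ) (F n) = ((‖F n‖ ^ 2 : ℝ) : ℂ) := by
    rw [Complex.mul_conj, Complex.normSq_eq_norm_sq, Complex.ofReal_pow]
  have expand : (((Real.sqrt (1 - ‖F n‖ ^ 2))⁻¹ : ℝ) : ℂ) *
      (((Real.sqrt (1 - ‖F n‖ ^ 2))⁻¹ : ℝ) : ℂ) * (F n * z ^ n *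
      ((starRingEnd ℂ) (F n) * z ^ (-n))) =
      ((1 - ‖F n‖ ^ 2 : ℝ) : ℂ)⁻¹ * ((‖F n‖ ^ 2 : ℝ) : ℂ) := by
    rw [← sq, hsq]
    rw [show F n * z ^ n * ((starRingEnd ℂ) (F n) * z ^ (-n))
      = F n * (starRingEnd ℂ) (F n) * (z ^ n * z ^ (-n)) by ring, hzz, hFmul, mul_one]
  calc _ = (((Real.sqrt (1 - ‖F n‖ ^ 2))⁻¹ : ℝ) : ℂ) *
        (((Real.sqrt (1 - ‖F n‖ ^ 2))⁻¹ : ℝ) : ℂ) - (((Real.sqrt (1 - ‖F n‖ ^ 2))⁻¹ : ℝ) : ℂ) *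
        (((Real.sqrt (1 - ‖F n‖ ^ 2))⁻¹ : ℝ) : ℂ) * (F n * z ^ n *
        ((starRingEnd ℂ) (F n) * z ^ (-n))) := by ring
    _ = 1 := by
        rw [expand, ← sq, hsq, ← Complex.ofReal_inv, ← Complex.ofReal_mul, ← Complex.ofReal_sub,
          show (1:ℂ) = ((1:ℝ):ℂ) by norm_num]
        congr 1
        field_simp

lemma det_prod (F : ℤ → ℂ) (hF : ∀ n, ‖F n‖ < 1) {z : ℂ} (hz : z ≠ 0) (l : List ℤ) :
    ((l.map (transfer F z)).prod).det = 1 := by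
  induction l with
  | nil => simp
  | cons n l ih => simp [Matrix.det_mul, ih, det_transfer F hF hz n]

/-- On the circle, `|a|² = 1 + |b|²`. -/
lemma circle_identity (F : ℤ → ℂ) (hF : ∀ n, ‖F n‖ < 1) {z : ℂ}
    (hz : ‖z‖ = 1) (l : List ℤ) :
    ‖(l.map (transfer F z)).prod 0 0‖ ^ 2
      = 1 + ‖(l.map (transfer F z)).prod 0 1‖ ^ 2 := by
  have hz0 : z ≠ 0 := by intro h; rw [h] at hz; simp at hz
  have hdet := det_prod F hF hz0 l
  rw [Matrix.det_fin_two] at hdet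
  obtain ⟨h11, h10⟩ := prod_symm F hz l
  rw [h11, h10] at hdet
  set a := (l.map (transfer F z)).prod 0 0
  set b := (l.map (transfer F z)).prod 0 1
  have : ((‖a‖ ^ 2 : ℝ) : ℂ) - ((‖b‖ ^ 2 : ℝ) : ℂ) = 1 := by
    rw [show ((‖a‖ ^ 2 : ℝ) : ℂ) = a * (starRingEnd ℂ) a by
          rw [Complex.mul_conj, Complex.normSq_eq_norm_sq],
        show ((‖b‖ ^ 2 : ℝ) : ℂ) = b * (starRingEnd ℂ) b by
          rw [Complex.mul_conj, Complex.normSq_eq_norm_sq]]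
    linear_combination hdet
  have h2 : ((‖a‖ ^ 2 - ‖b‖ ^ 2 : ℝ) : ℂ) = ((1:ℝ):ℂ) := by
    rw [Complex.ofReal_sub, this, Complex.ofReal_one]
  have := Complex.ofReal_injective h2
  linarith

lemma sq_pos_of_F (F : ℤ → ℂ) (hF : ∀ n, ‖F n‖ < 1) (n : ℤ) :
    (0:ℝ) < 1 - ‖F n‖ ^ 2 := by
  have := hF n; nlinarith [norm_nonneg (F n)]

lemma sn_pos (F : ℤ → ℂ) (hF : ∀ n, ‖F n‖ < 1) (n : ℤ) :
    (0:ℝ) < (Real.sqrt (1 - ‖F n‖ ^ 2))⁻¹ := by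
  exact inv_pos.2 (Real.sqrt_pos.2 (sq_pos_of_F F hF n))

lemma exists_poly (F : ℤ → ℂ) (hF : ∀ n, ‖F n‖ < 1) (l : List ℤ) :
    List.Pairwise (· < ·) l → ∀ N : ℤ, (∀ m ∈ l, m ≤ N) →
    ∃ P Q : Polynomial ℂ,
      (∀ z : ℂ, z ≠ 0 → ((l.map (transfer F z)).prod 0 0 = P.eval z⁻¹ ∧
        (l.map (transfer F z)).prod 0 1 = z ^ N * Q.eval z⁻¹)) ∧
      P.eval 0 = (((l.map (fun n => (Real.sqrt (1 - ‖F n‖ ^ 2))⁻¹)).prod : ℝ) : ℂ) ∧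
      ((∀ m ∈ l, m < N) → Q.eval 0 = 0) ∧
      (∀ w : ℂ, ‖w‖ ≤ 1 → P.eval w ≠ 0) := by
  induction l using List.reverseRecOn with
  | nil =>
    intro _ N _
    exact ⟨1, 0, fun z hz => by simp [Matrix.one_apply], by simp, fun _ => by simp,
      fun w _ => by simp⟩
  | append_singleton l n ih =>
    intro hsort N hN
    obtain ⟨hsl, -, hlt⟩ := List.pairwise_append.1 hsort
    have hlt' : ∀ m ∈ l, m < n := fun m hm => hlt m hm n (by simp)
    have hnN : n ≤ N := hN n (by simp)
    obtain ⟨P, Q, hPQ, hP0, hQ0, hPne⟩ := ih hsl n (fun m hm => (hlt' m hm).le)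
    have hQ00 : Q.eval 0 = 0 := hQ0 hlt'
    set sn : ℝ := (Real.sqrt (1 - ‖F n‖ ^ 2))⁻¹ with hsn
    have hsnpos : (0:ℝ) < sn := sn_pos F hF n
    have hsn0 : ((sn : ℝ) : ℂ) ≠ 0 := by exact_mod_cast hsnpos.ne'
    refine ⟨Polynomial.C (sn:ℂ) * (P + Polynomial.C ((starRingEnd ℂ) (F n)) * Q),
      Polynomial.C (sn:ℂ) * (Polynomial.C (F n) * P + Q) * Polynomial.X ^ (N - n).toNat,
      ?_, ?_, ?_, ?_⟩
    · intro z hz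
      obtain ⟨ha, hb⟩ := hPQ z hz
      have hzz : z ^ n * z ^ (-n) = 1 := by rw [← zpow_add₀ hz]; simp
      have hprod : ((l ++ [n]).map (transfer F z)).prod
          = (l.map (transfer F z)).prod * transfer F z n := by
        rw [List.map_append, List.prod_append]; simp
      have hwk : z ^ N * (z⁻¹) ^ (N - n).toNat = z ^ n := by
        rw [inv_pow, ← zpow_natCast z, Int.toNat_of_nonneg (sub_nonneg.2 hnN), ← zpow_neg,
          ← zpow_add₀ hz]
        ring_nf
      constructor
      · rw [hprod, Matrix.mul_apply, Fin.sum_univ_two, transfer00, transfer10, ha, hb]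
        simp only [Polynomial.eval_mul, Polynomial.eval_add, Polynomial.eval_C]
        rw [← hsn]
        linear_combination ((sn:ℂ) * (starRingEnd ℂ) (F n) * Q.eval z⁻¹) * hzz
      · rw [hprod, Matrix.mul_apply, Fin.sum_univ_two, transfer01, transfer11, ha, hb]
        simp only [Polynomial.eval_mul, Polynomial.eval_add, Polynomial.eval_C,
          Polynomial.eval_pow, Polynomial.eval_X]
        rw [← hsn]
        linear_combination (-((sn:ℂ) * (F n) * P.eval z⁻¹) - (sn:ℂ) * Q.eval z⁻¹) * hwk
    · simp only [Polynomial.eval_mul, Polynomial.eval_add, Polynomial.eval_C, hP0, hQ00,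
        mul_zero, add_zero, List.map_append, List.prod_append, List.map_cons, List.map_nil,
        List.prod_cons, List.prod_nil, mul_one]
      push_cast
      rw [Complex.ofReal_inv]
      ring
    · intro hstrict
      have hnN' : n < N := hstrict n (by simp)
      have : (N - n).toNat ≠ 0 := by omega
      simp [Polynomial.eval_mul, Polynomial.eval_pow, zero_pow this]
    · intro w₀ hw₀
      simp only [Polynomial.eval_mul, Polynomial.eval_add, Polynomial.eval_C]
      have hQle : ‖Q.eval w₀‖ ≤ ‖P.eval w₀‖ := by
        have hd : DiffContOnCl ℂ (fun w => Q.eval w / P.eval w) (ball (0:ℂ) 1) := by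
          constructor
          · intro w hw
            exact ((Q.differentiableAt).div (P.differentiableAt)
              (hPne w (by simpa using (mem_ball_zero_iff.1 hw).le))).differentiableWithinAt
          · rw [closure_ball (0:ℂ) one_ne_zero]
            intro w hw
            exact (((Q.differentiableAt).div (P.differentiableAt)
              (hPne w (by simpa using mem_closedBall_zero_iff.1 hw))).continuousAt).continuousWithinAt
        have hb : ∀ w ∈ frontier (ball (0:ℂ) 1), ‖Q.eval w / P.eval w‖ ≤ 1 := by
          intro w hw
          rw [frontier_ball (0:ℂ) one_ne_zero, mem_sphere_zero_iff_norm] at hw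
          have hwabs : ‖w‖ = 1 := by exact hw
          have hw0 : w ≠ 0 := by intro h; rw [h] at hwabs; simp at hwabs
          have hzabs : ‖w⁻¹‖ = 1 := by rw [norm_inv, hwabs]; norm_num
          have hz0 : w⁻¹ ≠ 0 := inv_ne_zero hw0
          obtain ⟨ha, hbb⟩ := hPQ w⁻¹ hz0
          rw [inv_inv] at ha hbb
          have hci := circle_identity F hF hzabs l
          rw [ha, hbb] at hci
          have habsb : ‖(w⁻¹) ^ n * Q.eval w‖ = ‖Q.eval w‖ := by
            rw [norm_mul, norm_zpow, hzabs, one_zpow, one_mul]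
          rw [habsb] at hci
          have hQP : ‖Q.eval w‖ ≤ ‖P.eval w‖ := by
            nlinarith [norm_nonneg (Q.eval w), norm_nonneg (P.eval w)]
          rw [norm_div]
          have hPpos : 0 < ‖P.eval w‖ := by
            have := hPne w (le_of_eq hwabs)
            exact norm_pos_iff.2 this
          rw [div_le_one hPpos]
          exact hQP
        have hmem : w₀ ∈ closure (ball (0:ℂ) 1) := by
          rw [closure_ball (0:ℂ) one_ne_zero]
          exact mem_closedBall_zero_iff.2 hw₀
        have key := Complex.norm_le_of_forall_mem_frontier_norm_le isBounded_ball hd hb hmem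
        rw [norm_div] at key
        have hPpos : 0 < ‖P.eval w₀‖ := norm_pos_iff.2 (hPne w₀ hw₀)
        calc ‖Q.eval w₀‖ = ‖Q.eval w₀‖ / ‖P.eval w₀‖
              * ‖P.eval w₀‖ := by field_simp
          _ ≤ 1 * ‖P.eval w₀‖ := by
              exact mul_le_mul_of_nonneg_right key (norm_nonneg _)
          _ = ‖P.eval w₀‖ := one_mul _
      have hPpos : 0 < ‖P.eval w₀‖ := norm_pos_iff.2 (hPne w₀ hw₀)
      have hlt2 : ‖(starRingEnd ℂ) (F n) * Q.eval w₀‖ < ‖P.eval w₀‖ := by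
        rw [norm_mul, Complex.norm_conj]
        calc ‖F n‖ * ‖Q.eval w₀‖
            ≤ ‖F n‖ * ‖P.eval w₀‖ :=
              mul_le_mul_of_nonneg_left hQle (norm_nonneg _)
          _ < 1 * ‖P.eval w₀‖ := by
              exact mul_lt_mul_of_pos_right (hF n) hPpos
          _ = _ := one_mul _
      intro h
      rcases mul_eq_zero.1 h with h1 | h2
      · exact hsn0 h1
      · have : (starRingEnd ℂ) (F n) * Q.eval w₀ = - P.eval w₀ := by linear_combination h2
        rw [this, norm_neg] at hlt2
        exact lt_irrefl _ hlt2



lemma term_diff {ρ w : ℂ} (hρ : 1 < ‖ρ‖) (hw : ‖w‖ ≤ 1) :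
    (1 - w * ρ⁻¹) ∈ Complex.slitPlane := by
  rw [Complex.mem_slitPlane_iff]
  left
  have h1 : ‖w * ρ⁻¹‖ < 1 := by
    rw [norm_mul, norm_inv]
    calc ‖w‖ * (‖ρ‖)⁻¹ ≤ 1 * (‖ρ‖)⁻¹ := by
          apply mul_le_mul_of_nonneg_right hw (by positivity)
      _ < 1 := by
          rw [one_mul, inv_lt_one_iff₀]
          right; exact hρ
  have h2 : (w * ρ⁻¹).re ≤ ‖w * ρ⁻¹‖ := Complex.re_le_norm _
  simp only [Complex.sub_re, Complex.one_re]
  linarith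

lemma list_sum_diff (R : List ℂ) (hR : ∀ ρ ∈ R, 1 < ‖ρ‖) {w : ℂ}
    (hw : ‖w‖ ≤ 1) :
    DifferentiableAt ℂ (fun w => (R.map (fun ρ => Complex.log (1 - w * ρ⁻¹))).sum) w := by
  induction R with
  | nil => simp
  | cons ρ R ih =>
    simp only [List.map_cons, List.sum_cons]
    apply DifferentiableAt.add
    · exact DifferentiableAt.clog (by fun_prop) (term_diff (hR ρ (by simp)) hw)
    · exact ih (fun ρ' h => hR ρ' (by simp [h]))

lemma mean_value (P : Polynomial ℂ) (c : ℝ) (hc : 0 < c) (hP0 : P.eval 0 = (c : ℂ))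
    (hPne : ∀ w : ℂ, ‖w‖ ≤ 1 → P.eval w ≠ 0) :
    ∫ θ in (0:ℝ)..(2 * Real.pi), Real.log (‖P.eval (Complex.exp (θ * Complex.I))‖)
      = 2 * Real.pi * Real.log c := by
  have hcC : (c : ℂ) ≠ 0 := by exact_mod_cast hc.ne'
  have hP : P ≠ 0 := fun h => by simp [h] at hP0; exact hcC hP0.symm
  have hroots : ∀ ρ ∈ P.roots, 1 < ‖ρ‖ := by
    intro ρ hρ
    by_contra h
    push_neg at h
    exact hPne ρ h ((Polynomial.mem_roots hP).1 hρ)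
  set R : List ℂ := P.roots.toList with hRdef
  have hRmem : ∀ ρ ∈ R, 1 < ‖ρ‖ := fun ρ h => hroots ρ (by
    rwa [← Multiset.mem_toList])
  set L : ℂ → ℂ := fun w => ((Real.log c : ℝ) : ℂ)
    + (R.map (fun ρ => Complex.log (1 - w * ρ⁻¹))).sum with hLdef
  have hR0 : ∀ ρ ∈ R, ρ ≠ 0 := by
    intro ρ h hzero
    have := hRmem ρ h
    rw [hzero] at this
    norm_num at this
  -- P factors through its roots
  have hfactor : ∀ w : ℂ, P.eval w = (c : ℂ) * (R.map (fun ρ => 1 - w * ρ⁻¹)).prod := by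
    have hcard : Multiset.card P.roots = P.natDegree :=
      (Polynomial.splits_iff_card_roots.1 (IsAlgClosed.splits P))
    have hsplit := Polynomial.C_leadingCoeff_mul_prod_multiset_X_sub_C (p := P) hcard
    have heval : ∀ w : ℂ, P.eval w = P.leadingCoeff * (R.map (fun ρ => w - ρ)).prod := by
      intro w
      conv_lhs => rw [← hsplit]
      rw [Polynomial.eval_mul, Polynomial.eval_C, Polynomial.eval_multiset_prod,
        Multiset.map_map]
      congr 1
      have hmm : (Multiset.map ((Polynomial.eval w) ∘ fun a => X - Polynomial.C a) P.roots)
          = Multiset.map (fun a => w - a) P.roots := by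
        apply Multiset.map_congr rfl
        intro ρ _; simp
      rw [hmm, ← Multiset.coe_toList P.roots, Multiset.map_coe, Multiset.prod_coe]
    intro w
    have hc0 : (c : ℂ) = P.leadingCoeff * (R.map (fun ρ => (0:ℂ) - ρ)).prod := by
      rw [← hP0, heval 0]
    rw [heval w, hc0, mul_assoc, ← List.prod_map_mul]
    have hme : List.map (fun ρ => w - ρ) R = List.map (fun i => (0 - i) * (1 - w * i⁻¹)) R :=
      List.map_congr_left fun ρ hρ => by
        have h0 : ρ ≠ 0 := hR0 ρ hρ
        field_simp
        ring
    rw [hme]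
  -- exp (L w) = P.eval w on the closed disc
  have hexpL : ∀ w : ℂ, ‖w‖ ≤ 1 → Complex.exp (L w) = P.eval w := by
    intro w hw
    rw [hLdef]
    simp only []
    rw [Complex.exp_add, Complex.exp_list_sum, List.map_map, hfactor w]
    congr 1
    · rw [← Complex.ofReal_exp, Real.exp_log hc]
    · have hme : List.map (Complex.exp ∘ fun ρ => Complex.log (1 - w * ρ⁻¹)) R
          = List.map (fun ρ => 1 - w * ρ⁻¹) R := by
        refine List.map_congr_left fun ρ hρ => ?_
        simp only [Function.comp_apply]
        apply Complex.exp_log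
        intro h0
        have hsp := term_diff (hRmem ρ hρ) hw
        rw [h0] at hsp
        exact Complex.zero_notMem_slitPlane hsp
      rw [hme]
  -- differentiability of L on the closed disc
  have hLdiff : ∀ w ∈ closedBall (0:ℂ) 1, DifferentiableAt ℂ L w := by
    intro w hw
    have hw1 : ‖w‖ ≤ 1 := by
      show ‖w‖ ≤ 1
      exact mem_closedBall_zero_iff.1 hw
    exact (differentiableAt_const _).add (list_sum_diff R hRmem hw1)
  have hLcont : ContinuousOn L (closedBall (0:ℂ) 1) :=
    fun w hw => ((hLdiff w hw).continuousAt).continuousWithinAt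
  -- Cauchy integral formula for L at 0
  have hcauchy := Complex.circleIntegral_sub_center_inv_smul_of_differentiable_on_off_countable
    (f := L) (c := 0) (R := 1) one_pos Set.countable_empty hLcont
    (fun z hz => hLdiff z (ball_subset_closedBall hz.1))
  rw [circleIntegral] at hcauchy
  simp only [deriv_circleMap, sub_zero, smul_eq_mul] at hcauchy
  have hinteq : ∀ θ : ℝ, circleMap 0 1 θ * Complex.I * ((circleMap 0 1 θ)⁻¹ * L (circleMap 0 1 θ))
      = Complex.I * L (circleMap 0 1 θ) := by
    intro θ
    have h0 : circleMap 0 1 θ ≠ 0 := circleMap_ne_center one_ne_zero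
    field_simp
  rw [intervalIntegral.integral_congr (fun θ _ => hinteq θ)] at hcauchy
  -- integrability of θ ↦ L (circleMap θ)
  have habs : ∀ θ : ℝ, ‖circleMap 0 1 θ‖ = 1 := by
    intro θ; simp [circleMap]
  have hLcm_cont : Continuous (fun θ : ℝ => L (circleMap 0 1 θ)) := by
    apply continuous_iff_continuousAt.2
    intro θ
    exact ((hLdiff (circleMap 0 1 θ) (by
      rw [mem_closedBall_zero_iff, habs θ])).continuousAt).comp
      (continuous_circleMap 0 1).continuousAt
  have hInt : IntervalIntegrable (fun θ : ℝ => L (circleMap 0 1 θ))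
      MeasureTheory.volume 0 (2 * Real.pi) := hLcm_cont.intervalIntegrable _ _
  rw [intervalIntegral.integral_const_mul] at hcauchy
  have hL0 : L 0 = ((Real.log c : ℝ) : ℂ) := by
    rw [hLdef]
    simp
  have hmain : ∫ θ in (0:ℝ)..(2 * Real.pi), L (circleMap 0 1 θ)
      = (2 * Real.pi : ℝ) * ((Real.log c : ℝ) : ℂ) := by
    apply mul_left_cancel₀ Complex.I_ne_zero
    rw [hcauchy, hL0]
    push_cast
    ring
  -- take real parts
  have hswap : (∫ θ in (0:ℝ)..(2 * Real.pi), (L (circleMap 0 1 θ)).re)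
      = (∫ θ in (0:ℝ)..(2 * Real.pi), L (circleMap 0 1 θ)).re := by
    simpa using Complex.reCLM.intervalIntegral_comp_comm hInt
  have hre2 : ∀ θ : ℝ, (L (circleMap 0 1 θ)).re
      = Real.log (‖P.eval (Complex.exp (θ * Complex.I))‖) := by
    intro θ
    have hcm : circleMap 0 1 θ = Complex.exp (θ * Complex.I) := by
      simp [circleMap]
    have h1 := hexpL (circleMap 0 1 θ) (le_of_eq (habs θ))
    have h2 : ‖P.eval (circleMap 0 1 θ)‖ = Real.exp ((L (circleMap 0 1 θ)).re) := by
      rw [← h1, Complex.norm_exp]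
    rw [hcm] at h2
    rw [h2, Real.log_exp, hcm]
  calc ∫ θ in (0:ℝ)..(2 * Real.pi), Real.log (‖P.eval (Complex.exp (θ * Complex.I))‖)
      = ∫ θ in (0:ℝ)..(2 * Real.pi), (L (circleMap 0 1 θ)).re :=
        intervalIntegral.integral_congr (fun θ _ => (hre2 θ).symm)
    _ = (∫ θ in (0:ℝ)..(2 * Real.pi), L (circleMap 0 1 θ)).re := hswap
    _ = ((2 * Real.pi : ℝ) * ((Real.log c : ℝ) : ℂ)).re := by rw [hmain]
    _ = 2 * Real.pi * Real.log c := by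
        rw [← Complex.ofReal_mul, Complex.ofReal_re]

lemma eval_map_conj (P : Polynomial ℂ) (w : ℂ) :
    (P.map (starRingEnd ℂ)).eval w = (starRingEnd ℂ) (P.eval ((starRingEnd ℂ) w)) := by
  rw [Polynomial.eval_map, Polynomial.eval₂_eq_sum_range, Polynomial.eval_eq_sum_range, map_sum]
  simp only [map_mul, map_pow, Complex.conj_conj]

/-- The nonlinear Plancherel identity: the normalized integral over the unit circle of
`log|a|` equals `−(1/2)·∑_n log(1 − |F_n|²)`. -/
theorem nlft_plancherel (F : ℤ → ℂ) (s : Finset ℤ) (hsupp : ∀ n ∉ s, F n = 0)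
    (hF : ∀ n, ‖F n‖ < 1) :
    (1 / (2 * Real.pi)) * ∫ θ in (0:ℝ)..(2 * Real.pi),
        Real.log ‖nlft F s (Complex.exp (θ * Complex.I)) 0 0‖ =
      -(1 / 2) * ∑ n ∈ s, Real.log (1 - ‖F n‖ ^ 2) := by
  -- a bound for the support
  obtain ⟨N, hNb⟩ : ∃ N : ℤ, ∀ m ∈ s.sort (· ≤ ·), m ≤ N := by
    rcases s.eq_empty_or_nonempty with h | h
    · exact ⟨0, by simp [h]⟩
    · exact ⟨s.max' h, fun m hm => Finset.le_max' s m ((Finset.mem_sort _).1 hm)⟩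
  obtain ⟨P, Q, hPQ, hP0, -, hPne⟩ :=
    exists_poly F hF (s.sort (· ≤ ·)) (Finset.sortedLT_sort s).pairwise N hNb
  -- the constant
  set c : ℝ := ((s.sort (· ≤ ·)).map (fun n => (Real.sqrt (1 - ‖F n‖ ^ 2))⁻¹)).prod
    with hcdef
  have hc : 0 < c := by
    apply List.prod_pos
    intro x hx
    rw [List.mem_map] at hx
    obtain ⟨n, -, rfl⟩ := hx
    exact inv_pos.2 (Real.sqrt_pos.2 (sq_pos_of_F F hF n))
  -- the conjugated polynomial
  set P₂ : Polynomial ℂ := P.map (starRingEnd ℂ) with hP₂def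
  have hP₂0 : P₂.eval 0 = (c : ℂ) := by
    rw [hP₂def, eval_map_conj, map_zero, hP0, Complex.conj_ofReal]
  have hP₂ne : ∀ w : ℂ, ‖w‖ ≤ 1 → P₂.eval w ≠ 0 := by
    intro w hw
    rw [hP₂def, eval_map_conj]
    intro h
    have h2 : P.eval ((starRingEnd ℂ) w) = 0 := by
      have := congrArg (starRingEnd ℂ) h
      rwa [Complex.conj_conj, map_zero] at this
    exact hPne _ (by rwa [Complex.norm_conj]) h2
  -- pointwise identity of integrands
  have hpt : ∀ θ : ℝ, Real.log (‖nlft F s (Complex.exp (θ * Complex.I)) 0 0‖)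
      = Real.log (‖P₂.eval (Complex.exp (θ * Complex.I))‖) := by
    intro θ
    set z : ℂ := Complex.exp (θ * Complex.I) with hzdef
    have hz0 : z ≠ 0 := Complex.exp_ne_zero _
    have hinv : z⁻¹ = (starRingEnd ℂ) z := by
      rw [hzdef, ← Complex.exp_conj]
      rw [← Complex.exp_neg]
      congr 1
      simp [Complex.ext_iff]
    have ha := (hPQ z hz0).1
    have h2 : ‖P₂.eval z‖ = ‖P.eval ((starRingEnd ℂ) z)‖ := by
      rw [hP₂def, eval_map_conj, Complex.norm_conj]
    rw [show nlft F s z 0 0 = ((s.sort (· ≤ ·)).map (transfer F z)).prod 0 0 from rfl, ha, hinv,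
      h2]
  -- apply the mean value theorem
  have hint := mean_value P₂ c hc hP₂0 hP₂ne
  rw [intervalIntegral.integral_congr (fun θ _ => hpt θ), hint]
  have hcancel : (1 / (2 * Real.pi)) * (2 * Real.pi * Real.log c) = Real.log c := by
    field_simp
  rw [hcancel]
  -- compute log c
  have hlp : c = ∏ n ∈ s, (Real.sqrt (1 - ‖F n‖ ^ 2))⁻¹ := by
    rw [hcdef, Finset.prod_eq_multiset_prod, ← Finset.sort_eq s (· ≤ ·), Multiset.map_coe,
      Multiset.prod_coe]
  rw [hlp, Real.log_prod
    (fun n _ => (inv_pos.2 (Real.sqrt_pos.2 (sq_pos_of_F F hF n))).ne')]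
  have hsum : ∑ n ∈ s, Real.log (Real.sqrt (1 - ‖F n‖ ^ 2))⁻¹
      = ∑ n ∈ s, -(1/2) * Real.log (1 - ‖F n‖ ^ 2) :=
    Finset.sum_congr rfl (fun n _ => by
      rw [Real.log_inv, Real.log_sqrt (sq_pos_of_F F hF n).le]
      ring)
  rw [hsum, ← Finset.mul_sum]
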